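/- Let E : ℝ≥0 → ℝ≥0 be non-increasing and suppose for some C₀, T > 0 that ∫_t^∞ E(s) ds ≤ T·E(t) + C₀ for all t ≥ 0. Then E(t) ≤ E(0)·exp(1 - t/T) + C₀/T for all t ≥ 0. -/

import Mathlib

open MeasureTheory Real Filter

theorem stmt_1 (E : ℝ → ℝ) (T C₀ : ℝ) (hT : 0 < T) (hC₀ : 0 < C₀)
    (hEnn : ∀ t, 0 ≤ t → 0 ≤ E t)
    (hEmono : AntitoneOn E (Set.Ici (0 : ℝ)))
    (hEint : ∀ t, 0 ≤ t → IntegrableOn E (Set.Ici t))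
    (hyp : ∀ t, 0 ≤ t → ∫ s in Set.Ici t, E s ≤ T * E t + C₀) :
    ∀ t, 0 ≤ t → E t ≤ E 0 * Real.exp (1 - t / T) + C₀ / T := by
  set F : ℝ → ℝ := fun t => ∫ s in Set.Ici t, E s with hFdef
  have hE0 : 0 ≤ E 0 := hEnn 0 le_rfl
  have hFnonneg : ∀ t, 0 ≤ t → 0 ≤ F t := fun t ht =>
    setIntegral_nonneg measurableSet_Ici (fun s hs => hEnn s (le_trans ht hs))
  have hsplit : ∀ s t : ℝ, 0 ≤ s → s ≤ t → F s = (∫ x in Set.Ico s t, E x) + F t := by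
    intro s t hs hst
    have hset : Set.Ico s t ∪ Set.Ici t = Set.Ici s := Set.Ico_union_Ici_eq_Ici hst
    have hdisj : Disjoint (Set.Ico s t) (Set.Ici t) := by
      rw [Set.disjoint_left]
      intro x hx hx'
      exact hx.2.not_ge hx'
    have h1 : IntegrableOn E (Set.Ico s t) :=
      (hEint s hs).mono_set Set.Ico_subset_Ici_self
    have h2 : IntegrableOn E (Set.Ici t) := hEint t (hs.trans hst)
    calc F s = ∫ x in Set.Ico s t ∪ Set.Ici t, E x := by rw [hset]
    _ = (∫ x in Set.Ico s t, E x) + F t :=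
        setIntegral_union hdisj measurableSet_Ici h1 h2
  have hlow : ∀ s t : ℝ, 0 ≤ s → s ≤ t → (t - s) * E t ≤ ∫ x in Set.Ico s t, E x := by
    intro s t hs hst
    have hconst : ∫ _ in Set.Ico s t, E t ∂volume = (t - s) * E t := by
      simp [Real.volume_Ico, ENNReal.toReal_ofReal (sub_nonneg.mpr hst), hst]
    rw [← hconst]
    refine setIntegral_mono_on (integrableOn_const measure_Ico_lt_top.ne)
      ((hEint s hs).mono_set Set.Ico_subset_Ici_self) measurableSet_Ico ?_
    intro x hx
    exact hEmono (Set.mem_Ici.mpr (hs.trans hx.1)) (Set.mem_Ici.mpr (hs.trans hst)) hx.2.le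
  have hstep : ∀ s h : ℝ, 0 ≤ s → 0 ≤ h →
      (F (s + h) - C₀) * (1 + h / T) ≤ F s - C₀ := by
    intro s h hs hh
    have h1 : F s = (∫ x in Set.Ico s (s + h), E x) + F (s + h) :=
      hsplit s (s + h) hs (by linarith)
    have h2 : h * E (s + h) ≤ ∫ x in Set.Ico s (s + h), E x := by
      have := hlow s (s + h) hs (by linarith)
      simpa using this
    have h3 : F (s + h) - C₀ ≤ T * E (s + h) := by
      have := hyp (s + h) (by linarith)
      linarith
    have h4 : (h / T) * (F (s + h) - C₀) ≤ (h / T) * (T * E (s + h)) :=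
      mul_le_mul_of_nonneg_left h3 (div_nonneg hh hT.le)
    have h5 : (h / T) * (T * E (s + h)) = h * E (s + h) := by
      field_simp
    nlinarith [h1, h2, h4, h5]
  -- main decay estimate for F
  have hFdecay : ∀ t : ℝ, 0 ≤ t → F t - C₀ ≤ T * E 0 * Real.exp (-(t / T)) := by
    intro t ht
    have hbound : ∀ n : ℕ, 0 < n → F t - C₀ ≤ T * E 0 / (1 + (t / T) / n) ^ n := by
      intro n hn
      set h : ℝ := t / n with hhdef
      have hh : 0 ≤ h := div_nonneg ht (Nat.cast_nonneg n)
      have hpos : 0 < 1 + h / T := by positivity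
      have key : ∀ k : ℕ, F (k * h) - C₀ ≤ T * E 0 / (1 + h / T) ^ k := by
        intro k
        induction k with
        | zero =>
          simp only [Nat.cast_zero, zero_mul, pow_zero, div_one]
          have := hyp 0 le_rfl
          linarith
        | succ k ih =>
          have hk : (0 : ℝ) ≤ k * h := mul_nonneg (Nat.cast_nonneg k) hh
          have hs := hstep (k * h) h hk hh
          have heq : (k : ℝ) * h + h = ((k : ℕ) + 1 : ℕ) * h := by push_cast; ring
          rw [heq] at hs
          have : (F (((k : ℕ) + 1 : ℕ) * h) - C₀) * (1 + h / T) ≤ T * E 0 / (1 + h / T) ^ k :=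
            le_trans hs ih
          rw [← le_div_iff₀ hpos] at this
          calc F (((k : ℕ) + 1 : ℕ) * h) - C₀ ≤ T * E 0 / (1 + h / T) ^ k / (1 + h / T) := this
          _ = T * E 0 / (1 + h / T) ^ (k + 1) := by rw [div_div, ← pow_succ]
      have hnt : (n : ℝ) * h = t := by
        rw [hhdef]
        field_simp
      have := key n
      rw [hnt] at this
      have harg : h / T = (t / T) / n := by rw [hhdef]; ring
      rw [harg] at this
      exact this
    have hlim : Tendsto (fun n : ℕ => T * E 0 / (1 + (t / T) / n) ^ n) atTop
        (nhds (T * E 0 / Real.exp (t / T))) :=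
      Filter.Tendsto.div tendsto_const_nhds (Real.tendsto_one_add_div_pow_exp (t / T))
        (Real.exp_ne_zero _)
    have hle : F t - C₀ ≤ T * E 0 / Real.exp (t / T) := by
      refine ge_of_tendsto hlim ?_
      filter_upwards [eventually_gt_atTop 0] with n hn using hbound n hn
    calc F t - C₀ ≤ T * E 0 / Real.exp (t / T) := hle
    _ = T * E 0 * Real.exp (-(t / T)) := by rw [Real.exp_neg]; ring
  -- finish
  intro t ht
  rcases le_or_gt T t with hTt | htT
  · have hs0 : (0 : ℝ) ≤ t - T := by linarith
    have h1 : T * E t ≤ ∫ x in Set.Ico (t - T) t, E x := by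
      have := hlow (t - T) t hs0 (by linarith)
      simpa using this
    have h2 : F (t - T) = (∫ x in Set.Ico (t - T) t, E x) + F t :=
      hsplit (t - T) t hs0 (by linarith)
    have h3 : F (t - T) - C₀ ≤ T * E 0 * Real.exp (-((t - T) / T)) := hFdecay (t - T) hs0
    have h4 : -((t - T) / T) = 1 - t / T := by field_simp; ring
    rw [h4] at h3
    have h5 : 0 ≤ F t := hFnonneg t ht
    have h6 : T * E t ≤ T * E 0 * Real.exp (1 - t / T) + C₀ := by linarith
    have : E t ≤ (T * E 0 * Real.exp (1 - t / T) + C₀) / T := by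
      rw [le_div_iff₀ hT]
      linarith [h6]
    calc E t ≤ (T * E 0 * Real.exp (1 - t / T) + C₀) / T := this
    _ = E 0 * Real.exp (1 - t / T) + C₀ / T := by field_simp
  · have h1 : E t ≤ E 0 := hEmono (Set.mem_Ici.mpr le_rfl) (Set.mem_Ici.mpr ht) ht
    have h2 : (1 : ℝ) ≤ Real.exp (1 - t / T) := by
      rw [Real.one_le_exp_iff]
      have : t / T < 1 := (div_lt_one hT).mpr htT
      linarith
    have h3 : E 0 * 1 ≤ E 0 * Real.exp (1 - t / T) := mul_le_mul_of_nonneg_left h2 hE0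
    have h4 : 0 < C₀ / T := div_pos hC₀ hT
    linarith [h3]
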